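/- arXiv:1805.07273 — 8 statements merged into one kernel-verified Lean document; each statement's English description precedes it below -/
import Mathlib

section
/- Let n ≥ 1, let U : ℝⁿ → ℝ be continuously differentiable, let f_U : ℝⁿ → ℝⁿ be continuous with ⟨∇U(x), f_U(x)⟩ ≤ 0 for all x ∈ ℝⁿ, and set f := -∇U + f_U. Then for every σ > 0, every T > 0, and every C¹ path φ : [0,T] → ℝⁿ, the Freidlin–Wentzell action satisfies S(φ) ≥ (4/σ²)·(U(φ(T)) − U(φ(0))). -/
open MeasureTheory
open scoped RealInnerProductSpace

lemma aux_ptwise {n : ℕ} (a g h : EuclideanSpace ℝ (Fin n)) (hgh : ⟪g, h⟫ ≤ 0) :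
    4 * ⟪g, a⟫ ≤ ‖a + g - h‖^2 := by
  have e1 : a + g - h = (a - h) + g := by abel
  have e2 : ‖(a-h)+g‖^2 = ‖(a-h)-g‖^2 + 4*⟪a-h,g⟫ := by
    rw [norm_add_sq_real (a-h) g, norm_sub_sq_real (a-h) g]; ring
  have e3 : ⟪a - h, g⟫ = ⟪a, g⟫ - ⟪h, g⟫ := inner_sub_left _ _ _
  rw [e1, e2, e3, real_inner_comm g a]
  have := real_inner_comm g h
  nlinarith [sq_nonneg ‖(a-h)-g‖]

/-- under a sub-orthogonal decomposition `f = -∇U + f_U`,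
the Freidlin–Wentzell action of any C¹ path is bounded below by
`(4/σ²)·(U(φ(T)) − U(φ(0)))`. -/
theorem action_lower_bound (n : ℕ) (hn : 1 ≤ n)
    (U : EuclideanSpace ℝ (Fin n) → ℝ) (hU : ContDiff ℝ 1 U)
    (fU : EuclideanSpace ℝ (Fin n) → EuclideanSpace ℝ (Fin n)) (hfU : Continuous fU)
    (hsub : ∀ x, ⟪gradient U x, fU x⟫ ≤ 0)
    (f : EuclideanSpace ℝ (Fin n) → EuclideanSpace ℝ (Fin n))
    (hf : ∀ x, f x = -gradient U x + fU x)
    (σ T : ℝ) (hσ : 0 < σ) (hT : 0 < T)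
    (φ φ' : ℝ → EuclideanSpace ℝ (Fin n))
    (hφ : ∀ t ∈ Set.Icc (0:ℝ) T, HasDerivWithinAt φ (φ' t) (Set.Icc (0:ℝ) T) t)
    (hφ' : ContinuousOn φ' (Set.Icc (0:ℝ) T)) :
    (4/σ^2) * (U (φ T) - U (φ 0)) ≤
      (1/σ^2) * ∫ t in (0:ℝ)..T, ‖φ' t - f (φ t)‖^2 := by
  have hgrad : Continuous (gradient U) := by
    unfold gradient
    exact (LinearIsometryEquiv.continuous _).comp (hU.continuous_fderiv one_ne_zero)
  have hφc : ContinuousOn φ (Set.Icc (0:ℝ) T) :=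
    fun t ht => (hφ t ht).continuousWithinAt
  -- continuous derivative of U ∘ φ
  set D : ℝ → ℝ := fun t => ⟪gradient U (φ t), φ' t⟫ with hD
  have hDcont : ContinuousOn D (Set.Icc (0:ℝ) T) :=
    ContinuousOn.inner (hgrad.comp_continuousOn hφc) hφ'
  have hRHScont : ContinuousOn (fun t => ‖φ' t - f (φ t)‖^2) (Set.Icc (0:ℝ) T) := by
    have hfc : Continuous f := by
      have : f = fun x => -gradient U x + fU x := funext hf
      rw [this]; exact hgrad.neg.add hfU
    exact ((hφ'.sub (hfc.comp_continuousOn hφc)).norm.pow 2)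
  have huIcc : Set.uIcc (0:ℝ) T = Set.Icc 0 T := Set.uIcc_of_le hT.le
  have hDint : IntervalIntegrable D volume 0 T :=
    (hDcont.mono (le_of_eq huIcc)).intervalIntegrable
  have hRHSint : IntervalIntegrable (fun t => ‖φ' t - f (φ t)‖^2) volume 0 T :=
    (hRHScont.mono (le_of_eq huIcc)).intervalIntegrable
  -- FTC: ∫ D = U(φ T) - U(φ 0)
  have hftc : ∫ t in (0:ℝ)..T, D t = U (φ T) - U (φ 0) := by
    apply intervalIntegral.integral_eq_sub_of_hasDeriv_right_of_le hT.le
    · exact (hU.continuous.comp_continuousOn hφc)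
    · intro t ht
      have htmem : t ∈ Set.Icc (0:ℝ) T := Set.Ioo_subset_Icc_self ht
      have hgU : HasGradientAt U (gradient U (φ t)) (φ t) :=
        ((hU.differentiable one_ne_zero) (φ t)).hasGradientAt
      have hfd := hgU.hasFDerivAt
      have hcomp := hfd.comp_hasDerivWithinAt t (hφ t htmem)
      have hmem : Set.Icc (0:ℝ) T ∈ nhdsWithin t (Set.Ioi t) := by
        apply mem_nhdsWithin.2
        exact ⟨Set.Iio T, isOpen_Iio, ht.2, fun x hx =>
          ⟨ht.1.le.trans hx.2.le, hx.1.le⟩⟩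
      have := hcomp.mono_of_mem_nhdsWithin hmem
      simpa [D, InnerProductSpace.toDual, Function.comp_def] using this
    · exact hDint
  -- pointwise bound and integral monotonicity
  have hmono : ∫ t in (0:ℝ)..T, 4 * D t ≤ ∫ t in (0:ℝ)..T, ‖φ' t - f (φ t)‖^2 := by
    apply intervalIntegral.integral_mono_on hT.le (hDint.const_mul 4) hRHSint
    intro t ht
    have : φ' t - f (φ t) = φ' t + gradient U (φ t) - fU (φ t) := by
      rw [hf]; abel
    rw [this]
    exact aux_ptwise (φ' t) (gradient U (φ t)) (fU (φ t)) (hsub (φ t))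
  rw [intervalIntegral.integral_const_mul, hftc] at hmono
  have hσ2 : (0:ℝ) < σ^2 := by positivity
  have : (4/σ^2) * (U (φ T) - U (φ 0)) = (1/σ^2) * (4 * (U (φ T) - U (φ 0))) := by ring
  rw [this]
  exact mul_le_mul_of_nonneg_left hmono (by positivity)
end

section
/- Let n ≥ 1, let U : ℝⁿ → ℝ be continuously differentiable, let f_U : ℝⁿ → ℝⁿ be continuous with ⟨∇U(x), f_U(x)⟩ ≤ 0 for all x ∈ ℝⁿ, set f := -∇U + f_U, and fix σ > 0 and points a, x ∈ ℝⁿ. Define the quasi-potential Q_a(x) as the infimum, over all T > 0 and all C¹ paths φ : [0,T] → ℝⁿ with φ(0) = a and φ(T) = x, of the action S(φ) = (1/σ²)·∫₀ᵀ ‖φ̇(t) − f(φ(t))‖² dt. Then Q_a(x) ≥ (4/σ²)·(U(x) − U(a)). -/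
open MeasureTheory
open scoped RealInnerProductSpace

/-- under a sub-orthogonal decomposition `f = -∇U + f_U`, the
quasi-potential `Q_a(x)` (the infimum of the Freidlin–Wentzell action over all
times `T > 0` and C¹ paths from `a` to `x`) is bounded below by
`(4/σ²)·(U(x) − U(a))`. -/
theorem quasipotential_lower_bound (n : ℕ) (hn : 1 ≤ n)
    (U : EuclideanSpace ℝ (Fin n) → ℝ) (hU : ContDiff ℝ 1 U)
    (fU : EuclideanSpace ℝ (Fin n) → EuclideanSpace ℝ (Fin n)) (hfU : Continuous fU)
    (hsub : ∀ x, ⟪gradient U x, fU x⟫ ≤ 0)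
    (f : EuclideanSpace ℝ (Fin n) → EuclideanSpace ℝ (Fin n))
    (hf : ∀ x, f x = -gradient U x + fU x)
    (σ : ℝ) (hσ : 0 < σ) (a x : EuclideanSpace ℝ (Fin n)) :
    (4/σ^2) * (U x - U a) ≤
      sInf {s : ℝ | ∃ T : ℝ, 0 < T ∧ ∃ φ φ' : ℝ → EuclideanSpace ℝ (Fin n),
        (∀ t ∈ Set.Icc (0:ℝ) T, HasDerivWithinAt φ (φ' t) (Set.Icc (0:ℝ) T) t) ∧
        ContinuousOn φ' (Set.Icc (0:ℝ) T) ∧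
        φ 0 = a ∧ φ T = x ∧
        s = (1/σ^2) * ∫ t in (0:ℝ)..T, ‖φ' t - f (φ t)‖^2} := by
  have hgrad : Continuous (fun y => gradient U y) := by
    have h1 : Continuous (fderiv ℝ U) := hU.continuous_fderiv one_ne_zero
    exact ((InnerProductSpace.toDual ℝ (EuclideanSpace ℝ (Fin n))).symm.continuous).comp h1
  have hfc : Continuous f := by
    have : Continuous (fun y => -gradient U y + fU y) := (hgrad.neg).add hfU
    exact this.congr (fun y => (hf y).symm)
  apply le_csInf
  · refine ⟨(1/σ^2) * ∫ t in (0:ℝ)..1, ‖(x - a) - f ((fun t : ℝ => a + t • (x - a)) t)‖^2,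
      1, one_pos, fun t : ℝ => a + t • (x - a), fun _ => x - a, ?_, continuousOn_const,
      by simp, by simp, rfl⟩
    intro t ht
    have : HasDerivAt (fun t : ℝ => a + t • (x - a)) (x - a) t := by
      simpa using ((hasDerivAt_id t).smul_const (x - a)).const_add a
    exact this.hasDerivWithinAt
  · rintro s ⟨T, hT, φ, φ', hφ, hφ', h0, hTx, rfl⟩
    have hφc : ContinuousOn φ (Set.Icc 0 T) := fun t ht => (hφ t ht).continuousWithinAt
    -- derivative of U ∘ φ
    have hcomp : ∀ t ∈ Set.Icc (0:ℝ) T,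
        HasDerivWithinAt (fun t => U (φ t)) (⟪gradient U (φ t), φ' t⟫) (Set.Icc (0:ℝ) T) t := by
      intro t ht
      have hg : HasFDerivAt U ((InnerProductSpace.toDual ℝ (EuclideanSpace ℝ (Fin n)))
          (gradient U (φ t))) (φ t) :=
        ((hU.differentiable one_ne_zero) (φ t)).hasGradientAt.hasFDerivAt
      have := hg.comp_hasDerivWithinAt t (hφ t ht)
      simp [InnerProductSpace.toDual_apply_apply] at this ⊢
      exact this
    -- continuity/integrability of the inner integrand
    have hinnerC : ContinuousOn (fun t => ⟪gradient U (φ t), φ' t⟫) (Set.Icc 0 T) :=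
      (hgrad.comp_continuousOn hφc).inner hφ'
    have hinnerI : IntervalIntegrable (fun t => ⟪gradient U (φ t), φ' t⟫) volume 0 T := by
      apply ContinuousOn.intervalIntegrable
      rwa [Set.uIcc_of_le hT.le]
    have hnormC : ContinuousOn (fun t => ‖φ' t - f (φ t)‖^2) (Set.Icc 0 T) :=
      ((hφ'.sub (hfc.comp_continuousOn hφc)).norm).pow 2
    have hnormI : IntervalIntegrable (fun t => ‖φ' t - f (φ t)‖^2) volume 0 T := by
      apply ContinuousOn.intervalIntegrable
      rwa [Set.uIcc_of_le hT.le]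
    -- FTC
    have hFTC : ∫ t in (0:ℝ)..T, ⟪gradient U (φ t), φ' t⟫ = U x - U a := by
      rw [← h0, ← hTx]
      apply intervalIntegral.integral_eq_sub_of_hasDeriv_right_of_le hT.le
      · exact hU.continuous.comp_continuousOn hφc
      · intro t ht
        exact ((hcomp t (Set.Ioo_subset_Icc_self ht)).hasDerivAt
          (Icc_mem_nhds ht.1 ht.2)).hasDerivWithinAt
      · exact hinnerI
    -- pointwise lower bound
    have hpt : ∀ t ∈ Set.Icc (0:ℝ) T,
        4 * ⟪gradient U (φ t), φ' t⟫ ≤ ‖φ' t - f (φ t)‖^2 := by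
      intro t _
      set g := gradient U (φ t)
      set v := φ' t
      set h := fU (φ t)
      have hvf : v - f (φ t) = (v - h) + g := by rw [hf]; abel
      have e1 : ‖(v - h) + g‖^2 = ‖(v - h) - g‖^2 + 4 * ⟪v - h, g⟫ := by
        have h1 := norm_add_sq_real (v - h) g
        have h2 := norm_sub_sq_real (v - h) g
        linarith
      have e2 : ⟪v - h, g⟫ = ⟪g, v⟫ - ⟪g, h⟫ := by
        rw [inner_sub_left, real_inner_comm v g, real_inner_comm h g]
      have hgh : ⟪g, h⟫ ≤ 0 := hsub (φ t)
      have hsq : 0 ≤ ‖(v - h) - g‖^2 := sq_nonneg _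
      rw [hvf, e1, e2]
      linarith
    -- integrate
    have hmono : ∫ t in (0:ℝ)..T, 4 * ⟪gradient U (φ t), φ' t⟫ ≤
        ∫ t in (0:ℝ)..T, ‖φ' t - f (φ t)‖^2 :=
      intervalIntegral.integral_mono_on hT.le (hinnerI.const_mul 4) hnormI hpt
    have hconst : ∫ t in (0:ℝ)..T, 4 * ⟪gradient U (φ t), φ' t⟫ = 4 * (U x - U a) := by
      rw [intervalIntegral.integral_const_mul, hFTC]
    have hmain : 4 * (U x - U a) ≤ ∫ t in (0:ℝ)..T, ‖φ' t - f (φ t)‖^2 := by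
      rw [← hconst]; exact hmono
    have hσ2 : (0:ℝ) < 1/σ^2 := by positivity
    calc (4/σ^2) * (U x - U a) = (1/σ^2) * (4 * (U x - U a)) := by ring
      _ ≤ (1/σ^2) * ∫ t in (0:ℝ)..T, ‖φ' t - f (φ t)‖^2 :=
          mul_le_mul_of_nonneg_left hmain hσ2.le
end

section
/- Let n ≥ 1, let U : ℝⁿ → ℝ be continuously differentiable, let f_U : ℝⁿ → ℝⁿ be continuous with ⟨∇U(x), f_U(x)⟩ = 0 for all x ∈ ℝⁿ, and set f := -∇U + f_U. Let σ > 0, T > 0, and let φ : [0,T] → ℝⁿ be a C¹ path satisfying the time-reversed ODE φ̇(t) = ∇U(φ(t)) + f_U(φ(t)) for all t ∈ [0,T]. Then the Freidlin–Wentzell action of φ equals exactly S(φ) = (4/σ²)·(U(φ(T)) − U(φ(0))). -/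
open MeasureTheory
open scoped RealInnerProductSpace

/-- under an orthogonal decomposition `f = -∇U + f_U`, a path
following the time-reversed ODE `φ̇ = ∇U(φ) + f_U(φ)` has Freidlin–Wentzell
action exactly `(4/σ²)·(U(φ(T)) − U(φ(0)))`. -/
theorem action_of_reversed_path (n : ℕ) (hn : 1 ≤ n)
    (U : EuclideanSpace ℝ (Fin n) → ℝ) (hU : ContDiff ℝ 1 U)
    (fU : EuclideanSpace ℝ (Fin n) → EuclideanSpace ℝ (Fin n)) (hfU : Continuous fU)
    (horth : ∀ x, ⟪gradient U x, fU x⟫ = 0)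
    (f : EuclideanSpace ℝ (Fin n) → EuclideanSpace ℝ (Fin n))
    (hf : ∀ x, f x = -gradient U x + fU x)
    (σ T : ℝ) (hσ : 0 < σ) (hT : 0 < T)
    (φ φ' : ℝ → EuclideanSpace ℝ (Fin n))
    (hφ : ∀ t ∈ Set.Icc (0:ℝ) T, HasDerivWithinAt φ (φ' t) (Set.Icc (0:ℝ) T) t)
    (hφ' : ContinuousOn φ' (Set.Icc (0:ℝ) T))
    (hODE : ∀ t ∈ Set.Icc (0:ℝ) T, φ' t = gradient U (φ t) + fU (φ t)) :
    (1/σ^2) * ∫ t in (0:ℝ)..T, ‖φ' t - f (φ t)‖^2 =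
      (4/σ^2) * (U (φ T) - U (φ 0)) := by
  have hUdiff : Differentiable ℝ U := hU.differentiable one_ne_zero
  -- continuity of gradient
  have hgrad_cont : Continuous (fun x => gradient U x) := by
    have h1 : Continuous (fun x => fderiv ℝ U x) := hU.continuous_fderiv one_ne_zero
    have : (fun x => gradient U x) =
        fun x => (InnerProductSpace.toDual ℝ (EuclideanSpace ℝ (Fin n))).symm (fderiv ℝ U x) := by
      funext x; rfl
    rw [this]
    exact (InnerProductSpace.toDual ℝ _).symm.continuous.comp h1
  have hφcont : ContinuousOn φ (Set.Icc 0 T) := fun t ht => (hφ t ht).continuousWithinAt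
  -- derivative of U ∘ φ
  have hcomp : ∀ t ∈ Set.Icc (0:ℝ) T,
      HasDerivWithinAt (fun s => U (φ s)) (‖gradient U (φ t)‖^2) (Set.Icc 0 T) t := by
    intro t ht
    have hg : HasGradientAt U (gradient U (φ t)) (φ t) := (hUdiff (φ t)).hasGradientAt
    have := hg.hasFDerivAt.comp_hasDerivWithinAt t (hφ t ht)
    have hval : (InnerProductSpace.toDual ℝ (EuclideanSpace ℝ (Fin n))) (gradient U (φ t)) (φ' t)
        = ‖gradient U (φ t)‖^2 := by
      rw [InnerProductSpace.toDual_apply_apply, hODE t ht, inner_add_right, horth,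
        real_inner_self_eq_norm_sq, add_zero]
    rw [hval] at this; exact this
  have hle : (0:ℝ) ≤ T := le_of_lt hT
  have hgint : IntervalIntegrable (fun t => ‖gradient U (φ t)‖^2) volume 0 T := by
    apply ContinuousOn.intervalIntegrable
    rw [Set.uIcc_of_le hle]
    exact ((hgrad_cont.comp_continuousOn hφcont).norm.pow 2)
  have hFTC : ∫ t in (0:ℝ)..T, ‖gradient U (φ t)‖^2 = U (φ T) - U (φ 0) := by
    apply intervalIntegral.integral_eq_sub_of_hasDeriv_right_of_le hle
    · exact hU.continuous.comp_continuousOn hφcont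
    · intro x hx
      have hxmem : x ∈ Set.Icc (0:ℝ) T := Set.mem_Icc_of_Ioo hx
      have := (hcomp x hxmem).hasDerivAt (Icc_mem_nhds hx.1 hx.2)
      exact this.hasDerivWithinAt
    · exact hgint
  have hcongr : ∫ t in (0:ℝ)..T, ‖φ' t - f (φ t)‖^2
      = ∫ t in (0:ℝ)..T, 4 * ‖gradient U (φ t)‖^2 := by
    apply intervalIntegral.integral_congr
    intro t ht
    rw [Set.uIcc_of_le hle] at ht
    have : φ' t - f (φ t) = (2:ℝ) • gradient U (φ t) := by
      rw [hODE t ht, hf]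
      module
    show ‖φ' t - f (φ t)‖^2 = 4 * ‖gradient U (φ t)‖^2
    rw [this, norm_smul, mul_pow]
    norm_num
  rw [hcongr, intervalIntegral.integral_const_mul, hFTC]
  ring
end

section
/- Let n ≥ 1, let U be a real polynomial in n variables, and let f₁, …, fₙ be real polynomials in n variables with e := maxᵢ totalDegree(fᵢ). Suppose that for all x ∈ ℝⁿ, Σᵢ (∂U/∂xᵢ)(x)·fᵢ(x) + Σᵢ ((∂U/∂xᵢ)(x))² ≤ 0. Then the total degree d of U satisfies d ≤ e + 1. -/
open MvPolynomial

noncomputable def Qv (n : ℕ) (v : Fin n → ℝ) : MvPolynomial (Fin n) ℝ →ₐ[ℝ] Polynomial ℝ :=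
  MvPolynomial.aeval (fun i => Polynomial.C (v i) * Polynomial.X)

lemma Qv_eq (n : ℕ) (v : Fin n → ℝ) (p : MvPolynomial (Fin n) ℝ) :
    Qv n v p = ∑ m ∈ p.support,
      Polynomial.C (MvPolynomial.coeff m p * ∏ i, v i ^ m i) * Polynomial.X ^ (∑ i, m i) := by
  rw [Qv, MvPolynomial.aeval_def, eval₂_eq']
  refine Finset.sum_congr rfl fun m _ => ?_
  simp only [mul_pow, ← Polynomial.C_pow, Finset.prod_mul_distrib, ← map_prod,
    Finset.prod_pow_eq_pow_sum, Polynomial.algebraMap_eq, map_mul]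
  ring

lemma natDegree_Qv_le (n : ℕ) (v : Fin n → ℝ) (p : MvPolynomial (Fin n) ℝ) :
    (Qv n v p).natDegree ≤ p.totalDegree := by
  rw [Qv_eq]
  refine Polynomial.natDegree_sum_le_of_forall_le _ _ fun m hm => ?_
  refine (Polynomial.natDegree_C_mul_le _ _).trans ?_
  refine (Polynomial.natDegree_X_pow _).le.trans ?_
  have := MvPolynomial.le_totalDegree hm
  rwa [Finsupp.sum_fintype _ _ (fun _ => rfl)] at this

lemma coeff_Qv (n : ℕ) (v : Fin n → ℝ) (p : MvPolynomial (Fin n) ℝ) (k : ℕ) :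
    (Qv n v p).coeff k = MvPolynomial.eval v (homogeneousComponent k p) := by
  rw [Qv_eq, homogeneousComponent_apply, map_sum, Polynomial.finset_sum_coeff]
  rw [Finset.sum_filter]
  refine Finset.sum_congr rfl fun m _ => ?_
  rw [Polynomial.coeff_C_mul, Polynomial.coeff_X_pow, MvPolynomial.eval_monomial]
  have hdeg : m.degree = ∑ i, m i := by
    rw [Finsupp.degree]
    exact Finset.sum_subset (Finset.subset_univ _) (fun i _ hi => Finsupp.notMem_support_iff.mp hi)
  have hprod : (m.prod fun i e => v i ^ e) = ∏ i, v i ^ m i :=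
    Finsupp.prod_fintype _ _ (fun _ => pow_zero _)
  rw [hprod, hdeg]
  by_cases h : k = ∑ i, m i
  · simp [h]
  · simp [h, Ne.symm h]


lemma eval_Qv (n : ℕ) (v : Fin n → ℝ) (p : MvPolynomial (Fin n) ℝ) (t : ℝ) :
    (Qv n v p).eval t = MvPolynomial.eval (fun i => v i * t) p := by
  induction p using MvPolynomial.induction_on with
  | C a => simp [Qv]
  | add p q hp hq => simp [hp, hq]
  | mul_X p j hp =>
      simp only [Qv, map_mul, MvPolynomial.aeval_X, MvPolynomial.eval_X,
        Polynomial.eval_mul, Polynomial.eval_C, Polynomial.eval_X] at hp ⊢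
      rw [hp]

lemma derivative_Qv (n : ℕ) (v : Fin n → ℝ) (p : MvPolynomial (Fin n) ℝ) :
    Polynomial.derivative (Qv n v p) =
      ∑ i, Polynomial.C (v i) * Qv n v (pderiv i p) := by
  induction p using MvPolynomial.induction_on with
  | C a => simp [Qv]
  | add p q hp hq => simp [hp, hq, map_add, mul_add, Finset.sum_add_distrib]
  | mul_X p j hp =>
      simp only [map_mul, Qv] at hp ⊢
      simp only [MvPolynomial.aeval_X, Polynomial.derivative_mul, hp, pderiv_mul, map_add,
        map_mul, MvPolynomial.aeval_X, mul_add, Finset.sum_add_distrib]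
      congr 1
      · rw [Finset.sum_mul]; exact Finset.sum_congr rfl fun i _ => by ring
      · rw [Polynomial.derivative_C, Polynomial.derivative_X, Finset.sum_eq_single j]
        · classical simp [pderiv_X]; ring
        · intro i _ hij
          classical
          simp [pderiv_X, Pi.single_eq_of_ne hij.symm]
        · simp

lemma totalDegree_pderiv_le' {n : ℕ} (p : MvPolynomial (Fin n) ℝ) (i : Fin n) {D : ℕ}
    (h : p.totalDegree ≤ D + 1) : (pderiv i p).totalDegree ≤ D := by
  classical
  have hdecomp : pderiv i p =
      ∑ m ∈ p.support, monomial (m - Finsupp.single i 1) (coeff m p * m i) := by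
    conv_lhs => rw [← p.support_sum_monomial_coeff, map_sum]
    exact Finset.sum_congr rfl fun m _ => pderiv_monomial
  rw [hdecomp]
  refine (totalDegree_finset_sum _ _).trans (Finset.sup_le fun m hm => ?_)
  by_cases hmi : m i = 0
  · simp [hmi]
  · refine (totalDegree_monomial_le _ _).trans ?_
    have hle := MvPolynomial.le_totalDegree hm
    rw [Finsupp.sum_fintype _ _ (fun _ => rfl)] at hle ⊢
    simp only [id, Finsupp.tsub_apply]
    have heq : ∑ x ∈ Finset.univ.erase i, (m x - Finsupp.single i 1 x)
        = ∑ x ∈ Finset.univ.erase i, m x := by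
      refine Finset.sum_congr rfl fun j hj => ?_
      rw [Finsupp.single_apply, if_neg (Finset.ne_of_mem_erase hj).symm]
      simp
    have h2 : ∑ j, (m j - Finsupp.single i 1 j)
        = (∑ x ∈ Finset.univ.erase i, m x) + (m i - 1) := by
      rw [← Finset.sum_erase_add _ _ (Finset.mem_univ i), heq, Finsupp.single_eq_same]
    have h3 : ∑ j, m j = (∑ x ∈ Finset.univ.erase i, m x) + m i :=
      (Finset.sum_erase_add _ _ (Finset.mem_univ i)).symm
    omega


/-- if the polynomial sub-orthogonality condition
`⟨∇U(x), f(x)⟩ + ‖∇U(x)‖² ≤ 0` holds for all `x ∈ ℝⁿ`, then the total degree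
`d` of `U` satisfies `d ≤ e + 1` where `e = maxᵢ totalDegree(fᵢ)`. -/
theorem degree_bound_of_suborthogonality (n : ℕ) (hn : 1 ≤ n)
    (U : MvPolynomial (Fin n) ℝ) (f : Fin n → MvPolynomial (Fin n) ℝ)
    (hsub : ∀ x : Fin n → ℝ,
      (∑ i : Fin n, (eval x) (pderiv i U) * (eval x) (f i)) +
      (∑ i : Fin n, ((eval x) (pderiv i U))^2) ≤ 0) :
    U.totalDegree ≤ (Finset.univ.sup fun i : Fin n => (f i).totalDegree) + 1 := by
  by_contra hlt
  push_neg at hlt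
  set e := Finset.univ.sup fun i : Fin n => (f i).totalDegree with he
  obtain ⟨D, hD⟩ : ∃ D, U.totalDegree = D + 1 := ⟨U.totalDegree - 1, by omega⟩
  have heD : e + 1 ≤ D := by omega
  -- the top homogeneous component of U is nonzero
  have hU0 : U ≠ 0 := by
    intro h
    rw [h, totalDegree_zero] at hD
    omega
  obtain ⟨m, hm, hmd⟩ :=
    Finset.exists_mem_eq_sup U.support (support_nonempty.mpr hU0) fun s => s.sum fun _ e => e
  have hmdeg : m.degree = D + 1 := by
    have : U.totalDegree = m.sum fun _ e => e := by rw [totalDegree, hmd]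
    rw [← hD, this, Finsupp.degree, Finsupp.sum]
    rfl
  have hH : homogeneousComponent (D + 1) U ≠ 0 := by
    intro h
    have hc := coeff_homogeneousComponent (D + 1) U m
    rw [h, if_pos hmdeg] at hc
    exact (mem_support_iff.mp hm) hc.symm
  -- choose a point where the top component doesn't vanish
  obtain ⟨v, hv⟩ : ∃ v : Fin n → ℝ, MvPolynomial.eval v (homogeneousComponent (D + 1) U) ≠ 0 := by
    by_contra hc
    push_neg at hc
    exact hH ((homogeneousComponent_isHomogeneous (D + 1) U).eq_zero_of_forall_eval_eq_zero hc)
  have hcoeffU : (Qv n v U).coeff (D + 1) ≠ 0 := by rw [coeff_Qv]; exact hv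
  have hderiv : (Polynomial.derivative (Qv n v U)).coeff D ≠ 0 := by
    rw [Polynomial.coeff_derivative]
    intro h
    rcases mul_eq_zero.mp h with h | h
    · exact hcoeffU h
    · exact (Nat.cast_add_one_ne_zero D) h
  obtain ⟨i0, hi0⟩ : ∃ i : Fin n, (Qv n v (pderiv i U)).coeff D ≠ 0 := by
    by_contra hc
    push_neg at hc
    apply hderiv
    rw [derivative_Qv, Polynomial.finset_sum_coeff]
    simp [Polynomial.coeff_C_mul, hc]
  have hAdeg : ∀ i, (Qv n v (pderiv i U)).natDegree ≤ D := fun i =>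
    (natDegree_Qv_le n v _).trans (totalDegree_pderiv_le' U i hD.le)
  have hBdeg : ∀ i, (Qv n v (f i)).natDegree ≤ e := by
    intro i
    rw [he]
    exact (natDegree_Qv_le n v _).trans (Finset.le_sup (f := fun i => (f i).totalDegree) (Finset.mem_univ i))
  set P : Polynomial ℝ := (∑ i, Qv n v (pderiv i U) * Qv n v (f i)) +
      ∑ i, (Qv n v (pderiv i U))^2 with hP
  have hPle : ∀ t : ℝ, P.eval t ≤ 0 := by
    intro t
    have h1 := hsub (fun i => v i * t)
    have h2 : P.eval t = (∑ i, (eval fun i => v i * t) (pderiv i U) * (eval fun i => v i * t) (f i)) +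
        ∑ i, ((eval fun i => v i * t) (pderiv i U))^2 := by
      simp [hP, Polynomial.eval_finset_sum, eval_Qv]
    rw [h2]
    exact h1
  have hScoeff : P.coeff (D + D) = ∑ i, ((Qv n v (pderiv i U)).coeff D)^2 := by
    rw [hP, Polynomial.coeff_add, Polynomial.finset_sum_coeff, Polynomial.finset_sum_coeff]
    have h1 : ∀ i : Fin n, (Qv n v (pderiv i U) * Qv n v (f i)).coeff (D + D) = 0 := fun i =>
      Polynomial.coeff_eq_zero_of_natDegree_lt
        (lt_of_le_of_lt (Polynomial.natDegree_mul_le.trans (add_le_add (hAdeg i) (hBdeg i)))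
          (by omega))
    have h2 : ∀ i : Fin n, ((Qv n v (pderiv i U))^2).coeff (D + D) = ((Qv n v (pderiv i U)).coeff D)^2 := by
      intro i
      rw [sq, sq, Polynomial.coeff_mul_add_eq_of_natDegree_le (hAdeg i) (hAdeg i)]
    simp [h1, h2]
  have hSpos : 0 < P.coeff (D + D) := by
    rw [hScoeff]
    refine Finset.sum_pos' (fun i _ => sq_nonneg _) ⟨i0, Finset.mem_univ _, ?_⟩
    positivity
  have hPdeg : P.natDegree ≤ D + D := by
    refine (Polynomial.natDegree_add_le _ _).trans (max_le ?_ ?_)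
    · refine Polynomial.natDegree_sum_le_of_forall_le _ _ fun i _ => ?_
      refine Polynomial.natDegree_mul_le.trans ?_
      have := hAdeg i; have := hBdeg i; omega
    · refine Polynomial.natDegree_sum_le_of_forall_le _ _ fun i _ => ?_
      rw [sq]
      refine Polynomial.natDegree_mul_le.trans ?_
      have := hAdeg i; omega
  have hPne : P ≠ 0 := fun h => by rw [h] at hSpos; simp at hSpos
  have hPnat : P.natDegree = D + D :=
    le_antisymm hPdeg (Polynomial.le_natDegree_of_ne_zero hSpos.ne')
  have hlead : 0 < P.leadingCoeff := by rw [Polynomial.leadingCoeff, hPnat]; exact hSpos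
  have hdegpos : 0 < P.degree := by
    rw [Polynomial.degree_eq_natDegree hPne, hPnat]
    exact_mod_cast (by omega : 0 < D + D)
  have htend := Polynomial.tendsto_atTop_of_leadingCoeff_nonneg P hdegpos hlead.le
  obtain ⟨t, ht⟩ := (htend.eventually_ge_atTop 1).exists
  have := hPle t
  linarith
end

section
/- Let n ≥ 1 and let A be a real n×n matrix. Write S := (1/2)(A + Aᵀ) for its symmetric part and K := (1/2)(A − Aᵀ) for its antisymmetric part, so that A = S + K. Then ⟨S x, K x⟩ = 0 for all x ∈ ℝⁿ (i.e. the symmetric/antisymmetric split is an orthogonal decomposition of the linear field Ax) if and only if A is normal, i.e. AᵀA = AAᵀ. -/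
open Matrix

lemma quad_zero_iff {n : ℕ} (M : Matrix (Fin n) (Fin n) ℝ) :
    (∀ x : Fin n → ℝ, x ⬝ᵥ M.mulVec x = 0) ↔ M + Mᵀ = 0 := by
  constructor
  · intro h
    ext i j
    have hi := h (Pi.single i 1)
    have hj := h (Pi.single j 1)
    have hij := h (Pi.single i 1 + Pi.single j 1)
    simp [mulVec_add, dotProduct_add, add_dotProduct, mulVec_single,
      dotProduct_single, single_dotProduct] at hi hj hij
    simp [Matrix.add_apply, Matrix.transpose_apply]
    linarith
  · intro h x
    have h2 : x ⬝ᵥ M.mulVec x + x ⬝ᵥ Mᵀ.mulVec x = 0 := by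
      rw [← dotProduct_add, ← add_mulVec, h]; simp
    have h3 : x ⬝ᵥ Mᵀ.mulVec x = x ⬝ᵥ M.mulVec x := by
      rw [mulVec_transpose, dotProduct_comm, dotProduct_mulVec]
    linarith [h2, h3.symm ▸ h2]

/-- with `S = (1/2)(A + Aᵀ)` the symmetric part and
`K = (1/2)(A − Aᵀ)` the antisymmetric part of `A`, the splitting `A = S + K`
is an orthogonal decomposition of the linear field `Ax`
(`⟨Sx, Kx⟩ = 0` for all `x`) if and only if `A` is normal (`AᵀA = AAᵀ`). -/
theorem symm_antisymm_orthogonal_iff_normal (n : ℕ) (hn : 1 ≤ n)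
    (A S K : Matrix (Fin n) (Fin n) ℝ)
    (hS : S = (1/2 : ℝ) • (A + Aᵀ)) (hK : K = (1/2 : ℝ) • (A - Aᵀ)) :
    (∀ x : Fin n → ℝ, (S.mulVec x) ⬝ᵥ (K.mulVec x) = 0) ↔ Aᵀ * A = A * Aᵀ := by
  have key : ∀ x : Fin n → ℝ, (S.mulVec x) ⬝ᵥ (K.mulVec x)
      = x ⬝ᵥ (Sᵀ * K).mulVec x := by
    intro x
    conv_rhs => rw [← mulVec_mulVec, dotProduct_mulVec, vecMul_transpose]
  have hsum : Sᵀ * K + (Sᵀ * K)ᵀ = (1/2 : ℝ) • (Aᵀ * A - A * Aᵀ) := by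
    subst hS hK
    simp only [transpose_smul, transpose_add, transpose_sub, transpose_mul,
      transpose_transpose, Matrix.smul_mul, Matrix.mul_smul, smul_smul,
      add_mul, mul_add, sub_mul, mul_sub, smul_sub, smul_add]
    module
  constructor
  · intro h
    have h0 : Sᵀ * K + (Sᵀ * K)ᵀ = 0 := (quad_zero_iff _).mp (fun x => (key x).symm.trans (h x))
    rw [hsum] at h0
    have := (smul_eq_zero.mp h0).resolve_left (by norm_num)
    exact sub_eq_zero.mp this
  · intro h x
    rw [key]
    apply (quad_zero_iff _).mpr
    rw [hsum, h]
    simp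
end

section
/- Let n ≥ 1 and let A be a real n×n matrix all of whose complex eigenvalues have strictly negative real part. Call a real symmetric n×n matrix P feasible if xᵀP(A+P)x ≤ 0 for all x ∈ ℝⁿ. Suppose P̂ is feasible and trace-maximal, i.e. tr(P) ≤ tr(P̂) for every feasible P. Then P̂ satisfies the algebraic Riccati equation P̂·A + Aᵀ·P̂ + 2P̂² = 0; consequently ⟨P̂x, (A+P̂)x⟩ = 0 for all x, so U(x) = (1/2)·xᵀP̂x yields an orthogonal decomposition Ax = −∇U(x) + (A+P̂)x. -/
open Matrix Polynomial Filter

variable {N : ℕ}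

lemma chareval (M : Matrix (Fin N) (Fin N) ℂ) (μ : ℂ) :
    M.charpoly.eval μ = (μ • (1 : Matrix (Fin N) (Fin N) ℂ) - M).det := by
  have h : M.charpoly.eval μ = ((charmatrix M).map (eval μ)).det := by
    have h2 := RingHom.map_det (evalRingHom μ) (charmatrix M)
    rw [Matrix.charpoly]
    simpa [RingHom.mapMatrix_apply] using h2
  rw [h]
  congr 1
  ext i j
  by_cases hij : i = j
  · subst hij
    simp [charmatrix_apply_eq, Matrix.one_apply, Matrix.sub_apply]
  · simp [charmatrix_apply_ne _ _ _ hij, Matrix.one_apply, hij, Matrix.sub_apply]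

lemma mem_spectrum_iff_det (M : Matrix (Fin N) (Fin N) ℂ) (μ : ℂ) :
    μ ∈ spectrum ℂ M ↔ (μ • (1 : Matrix (Fin N) (Fin N) ℂ) - M).det = 0 := by
  rw [spectrum.mem_iff, Algebra.algebraMap_eq_smul_one, Matrix.isUnit_iff_isUnit_det,
    isUnit_iff_ne_zero, not_ne_iff]

lemma sylv_inj (B : Matrix (Fin N) (Fin N) ℝ)
    (hB : ∀ μ ∈ spectrum ℂ (B.map (Complex.ofReal : ℝ → ℂ)), μ.re < 0)
    (F : Matrix (Fin N) (Fin N) ℝ) (hF : B * F + F * Bᵀ = 0) : F = 0 := by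
  set C : Matrix (Fin N) (Fin N) ℂ := B.map (Complex.ofReal : ℝ → ℂ) with hC
  set G : Matrix (Fin N) (Fin N) ℂ := F.map (Complex.ofReal : ℝ → ℂ) with hG
  have hmap : ∀ (M₁ M₂ : Matrix (Fin N) (Fin N) ℝ),
      (M₁ * M₂).map (Complex.ofReal : ℝ → ℂ) =
        M₁.map (Complex.ofReal : ℝ → ℂ) * M₂.map (Complex.ofReal : ℝ → ℂ) := by
    intro M₁ M₂
    ext i j
    simp [Matrix.mul_apply, Matrix.map_apply]
  have hCG : C * G = G * (-Cᵀ) := by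
    have h0 : (B * F + F * Bᵀ).map (Complex.ofReal : ℝ → ℂ) = 0 := by rw [hF]; ext i j; simp
    have hadd : ∀ (M₁ M₂ : Matrix (Fin N) (Fin N) ℝ), (M₁ + M₂).map (Complex.ofReal : ℝ → ℂ)
        = M₁.map (Complex.ofReal : ℝ → ℂ) + M₂.map (Complex.ofReal : ℝ → ℂ) := by
      intro M₁ M₂; ext i j; simp
    rw [hadd, hmap, hmap] at h0
    have hBT : (Bᵀ).map (Complex.ofReal : ℝ → ℂ) = Cᵀ := by ext i j; simp [hC]
    rw [hBT] at h0
    have : C * G + G * Cᵀ = 0 := h0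
    rw [Matrix.mul_neg]
    linear_combination (norm := noncomm_ring) this
  have hpow : ∀ k : ℕ, C ^ k * G = G * (-Cᵀ) ^ k := by
    intro k
    induction k with
    | zero => simp
    | succ k ih =>
      rw [pow_succ, pow_succ']
      calc C ^ k * C * G = C ^ k * (C * G) := by rw [mul_assoc]
        _ = C ^ k * (G * (-Cᵀ)) := by rw [hCG]
        _ = (C ^ k * G) * (-Cᵀ) := by rw [mul_assoc]
        _ = G * ((-Cᵀ) ^ k * (-Cᵀ)) := by rw [ih, mul_assoc]
        _ = G * (-Cᵀ) ^ (k+1) := by rw [← pow_succ]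
      rw [← pow_succ']
  have hpoly : ∀ p : ℂ[X], aeval C p * G = G * aeval (-Cᵀ) p := by
    intro p
    induction p using Polynomial.induction_on' with
    | add p q hp hq => rw [map_add, map_add, add_mul, mul_add, hp, hq]
    | monomial k a =>
      rw [aeval_monomial, aeval_monomial, mul_assoc, hpow, ← mul_assoc,
        Algebra.commutes a G, mul_assoc]
  have hzero : aeval C (charpoly (-Cᵀ)) * G = 0 := by
    rw [hpoly, Matrix.aeval_self_charpoly, Matrix.mul_zero]
  have hunit : IsUnit (aeval C (charpoly (-Cᵀ))) := by
    by_contra hnu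
    rw [(IsAlgClosed.splits (charpoly (-Cᵀ))).eq_prod_roots_of_monic
      (Matrix.charpoly_monic _)] at hnu
    obtain ⟨μ, hμmem, hμroot⟩ := spectrum.exists_mem_of_not_isUnit_aeval_prod hnu
    have h1 : μ.re < 0 := hB μ hμmem
    have h2 : (-μ).re < 0 := by
      apply hB
      rw [mem_spectrum_iff_det]
      have hd : (μ • (1 : Matrix (Fin N) (Fin N) ℂ) - (-Cᵀ)).det = 0 := by
        rw [← chareval]; exact hμroot
      have he : (μ • (1 : Matrix (Fin N) (Fin N) ℂ) - (-Cᵀ)) =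
          ((-((-μ) • (1 : Matrix (Fin N) (Fin N) ℂ) - C)))ᵀ := by
        ext i j
        by_cases hij : i = j
        · subst hij
          simp [Matrix.one_apply]
          ring
        · simp [Matrix.one_apply, hij, Ne.symm hij]
      rw [he, Matrix.det_transpose, Matrix.det_neg] at hd
      rcases mul_eq_zero.mp hd with h | h
      · exfalso
        simp at h
      · exact h
    simp only [Complex.neg_re] at h2
    linarith
  have hG0 : G = 0 := by
    obtain ⟨u, hu⟩ := hunit
    calc G = ↑u⁻¹ * (↑u * G) := by rw [← mul_assoc, Units.inv_mul, one_mul]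
      _ = ↑u⁻¹ * (aeval C (charpoly (-Cᵀ)) * G) := by rw [hu]
      _ = 0 := by rw [hzero, Matrix.mul_zero]
  ext i j
  have := congrFun (congrFun hG0 i) j
  simpa [hG, Complex.ofReal_eq_zero] using this

/-- flatten a matrix to a vector indexed by pairs -/
def vecM (F : Matrix (Fin N) (Fin N) ℝ) : (Fin N × Fin N) → ℝ := fun p => F p.1 p.2

def unvecM (g : (Fin N × Fin N) → ℝ) : Matrix (Fin N) (Fin N) ℝ :=
  Matrix.of fun i j => g (i, j)

lemma vecM_unvecM (g : (Fin N × Fin N) → ℝ) : vecM (unvecM g) = g := by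
  funext p; cases p; rfl

lemma vecM_inj (F G : Matrix (Fin N) (Fin N) ℝ) (h : vecM F = vecM G) : F = G := by
  ext i j; exact congrFun h (i, j)

def lyapMat (A : Matrix (Fin N) (Fin N) ℝ) : Matrix (Fin N × Fin N) (Fin N × Fin N) ℝ :=
  Matrix.of fun p q =>
    A p.1 q.1 * (if p.2 = q.2 then 1 else 0) + (if p.1 = q.1 then 1 else 0) * A p.2 q.2

lemma lyapMat_mulVec (A F : Matrix (Fin N) (Fin N) ℝ) :
    (lyapMat A) *ᵥ (vecM F) = vecM (A * F + F * Aᵀ) := by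
  funext p
  obtain ⟨i, j⟩ := p
  simp only [Matrix.mulVec, dotProduct, lyapMat, Matrix.of_apply, vecM,
    Fintype.sum_prod_type, add_mul, mul_ite, ite_mul, one_mul, mul_one, zero_mul, mul_zero,
    Finset.sum_add_distrib, Finset.sum_ite_eq, Finset.sum_ite_eq', Finset.mem_univ, if_true]
  simp [Matrix.add_apply, Matrix.mul_apply, Matrix.transpose_apply, mul_comm]

def Kmat (A : Matrix (Fin N) (Fin N) ℝ) (u : ℝ) : Matrix (Fin N × Fin N) (Fin N × Fin N) ℝ :=
  u • lyapMat A - (2 * (1 - u)) • (1 : Matrix (Fin N × Fin N) (Fin N × Fin N) ℝ)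

lemma Kmat_mulVec (A F : Matrix (Fin N) (Fin N) ℝ) (u : ℝ) :
    (Kmat A u) *ᵥ (vecM F) = vecM (u • (A * F + F * Aᵀ) - (2 * (1 - u)) • F) := by
  rw [Kmat, Matrix.sub_mulVec, Matrix.smul_mulVec, Matrix.smul_mulVec,
    lyapMat_mulVec, Matrix.one_mulVec]
  funext p
  simp [vecM, Matrix.sub_apply]; ring

lemma shifted_stable (A : Matrix (Fin N) (Fin N) ℝ)
    (hstab : ∀ μ ∈ spectrum ℂ (A.map (Complex.ofReal : ℝ → ℂ)), μ.re < 0)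
    (s : ℝ) (hs : 0 ≤ s) :
    ∀ μ ∈ spectrum ℂ ((A - s • (1 : Matrix (Fin N) (Fin N) ℝ)).map (Complex.ofReal : ℝ → ℂ)),
      μ.re < 0 := by
  intro μ hμ
  have hmapeq : (A - s • (1 : Matrix (Fin N) (Fin N) ℝ)).map (Complex.ofReal : ℝ → ℂ)
      = A.map (Complex.ofReal : ℝ → ℂ) - (s : ℂ) • (1 : Matrix (Fin N) (Fin N) ℂ) := by
    ext i j
    by_cases hij : i = j <;>
      simp [Matrix.map_apply, Matrix.sub_apply, Matrix.one_apply, hij]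
  rw [hmapeq] at hμ
  have hmem : μ + (s : ℂ) ∈ spectrum ℂ (A.map (Complex.ofReal : ℝ → ℂ)) := by
    rw [spectrum.mem_iff] at hμ ⊢
    intro hu
    apply hμ
    have : (algebraMap ℂ (Matrix (Fin N) (Fin N) ℂ)) (μ + s)
        - A.map (Complex.ofReal : ℝ → ℂ)
        = (algebraMap ℂ (Matrix (Fin N) (Fin N) ℂ)) μ
          - (A.map (Complex.ofReal : ℝ → ℂ) - (s:ℂ) • 1) := by
      rw [map_add, Algebra.algebraMap_eq_smul_one ((s : ℂ))]
      abel
    rwa [← this]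
  have := hstab _ hmem
  simp only [Complex.add_re, Complex.ofReal_re] at this
  linarith

lemma Kmat_det_ne (A : Matrix (Fin N) (Fin N) ℝ)
    (hstab : ∀ μ ∈ spectrum ℂ (A.map (Complex.ofReal : ℝ → ℂ)), μ.re < 0)
    (u : ℝ) (hu0 : 0 ≤ u) (hu1 : u ≤ 1) : (Kmat A u).det ≠ 0 := by
  intro hdet
  obtain ⟨v, hvne, hv⟩ := (Matrix.exists_mulVec_eq_zero_iff).mpr hdet
  set F := unvecM v with hF
  have hvF : vecM F = v := vecM_unvecM v
  have hFne : F ≠ 0 := by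
    intro h
    apply hvne
    rw [← hvF, h]
    funext p; simp [vecM]
  have heq : u • (A * F + F * Aᵀ) - (2 * (1 - u)) • F = 0 := by
    apply vecM_inj
    rw [← Kmat_mulVec, hvF, hv]
    funext p; simp [vecM]
  rcases eq_or_lt_of_le hu0 with h0 | hpos
  · -- u = 0
    apply hFne
    rw [← h0] at heq
    simp at heq
    exact heq
  · -- u > 0
    set s := (1 - u) / u with hs
    have hs0 : 0 ≤ s := div_nonneg (by linarith) (le_of_lt hpos)
    apply hFne
    apply sylv_inj (A - s • (1 : Matrix (Fin N) (Fin N) ℝ)) (shifted_stable A hstab s hs0)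
    have hexp : (A - s • 1) * F + F * (A - s • 1)ᵀ
        = (1 / u) • (u • (A * F + F * Aᵀ) - (2 * (1 - u)) • F) := by
      have hune : u ≠ 0 := ne_of_gt hpos
      rw [Matrix.transpose_sub, Matrix.transpose_smul, Matrix.transpose_one,
        Matrix.sub_mul, Matrix.mul_sub, Matrix.smul_mul, Matrix.mul_smul, Matrix.one_mul,
        Matrix.mul_one, hs]
      match_scalars <;> field_simp <;> ring
    rw [hexp, heq, smul_zero]

-- chunk 4
noncomputable def Gt (A Q : Matrix (Fin N) (Fin N) ℝ) (u : ℝ) : Matrix (Fin N) (Fin N) ℝ :=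
  unvecM (((Kmat A u).det)⁻¹ • ((Kmat A u).adjugate *ᵥ (-(vecM Q))))

lemma vecM_neg (Q : Matrix (Fin N) (Fin N) ℝ) : vecM (-Q) = -(vecM Q) := by
  funext p; simp [vecM]

lemma Gt_eq (A Q : Matrix (Fin N) (Fin N) ℝ) (u : ℝ) (hdet : (Kmat A u).det ≠ 0) :
    u • (A * Gt A Q u + Gt A Q u * Aᵀ) - (2 * (1 - u)) • Gt A Q u = -Q := by
  apply vecM_inj
  rw [← Kmat_mulVec, vecM_neg]
  rw [Gt, vecM_unvecM, Matrix.mulVec_smul, Matrix.mulVec_mulVec, Matrix.mul_adjugate,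
    Matrix.smul_mulVec, Matrix.one_mulVec, smul_smul, inv_mul_cancel₀ hdet, one_smul]

lemma Gt_unique (A Q : Matrix (Fin N) (Fin N) ℝ) (u : ℝ) (hdet : (Kmat A u).det ≠ 0)
    (G : Matrix (Fin N) (Fin N) ℝ)
    (hG : u • (A * G + G * Aᵀ) - (2 * (1 - u)) • G = -Q) : G = Gt A Q u := by
  have hK1 : Kmat A u *ᵥ vecM G = vecM (-Q) := by rw [Kmat_mulVec, hG]
  have hK2 : Kmat A u *ᵥ vecM (Gt A Q u) = vecM (-Q) := by
    rw [Kmat_mulVec, Gt_eq A Q u hdet]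
  have hsub : Kmat A u *ᵥ (vecM G - vecM (Gt A Q u)) = 0 := by
    rw [Matrix.mulVec_sub, hK1, hK2, sub_self]
  by_contra hne
  apply hdet
  apply Matrix.exists_mulVec_eq_zero_iff.mp
  refine ⟨vecM G - vecM (Gt A Q u), ?_, hsub⟩
  intro h
  exact hne (vecM_inj _ _ (sub_eq_zero.mp h))

lemma Gt_symm (A Q : Matrix (Fin N) (Fin N) ℝ) (u : ℝ) (hQT : Qᵀ = Q)
    (hdet : (Kmat A u).det ≠ 0) : (Gt A Q u)ᵀ = Gt A Q u := by
  have h := Gt_eq A Q u hdet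
  have h2 := congrArg Matrix.transpose h
  simp only [Matrix.transpose_sub, Matrix.transpose_smul, Matrix.transpose_add,
    Matrix.transpose_mul, Matrix.transpose_transpose, Matrix.transpose_neg, hQT] at h2
  rw [add_comm] at h2
  exact Gt_unique A Q u hdet _ h2

lemma Gt_contOn (A Q : Matrix (Fin N) (Fin N) ℝ)
    (hstab : ∀ μ ∈ spectrum ℂ (A.map (Complex.ofReal : ℝ → ℂ)), μ.re < 0) :
    ContinuousOn (fun u => Gt A Q u) (Set.Icc (0:ℝ) 1) := by
  have hKcont : Continuous (fun u => Kmat A u) := by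
    unfold Kmat
    exact (continuous_id.smul continuous_const).sub
      (((continuous_const.mul (continuous_const.sub continuous_id)).smul continuous_const))
  have hdetc : Continuous fun u => (Kmat A u).det := hKcont.matrix_det
  have hmv : Continuous fun u => (Kmat A u).adjugate *ᵥ (-(vecM Q)) :=
    (hKcont.matrix_adjugate).matrix_mulVec continuous_const
  have hinv : ContinuousOn (fun u => ((Kmat A u).det)⁻¹) (Set.Icc (0:ℝ) 1) :=
    hdetc.continuousOn.inv₀ (fun u hu => Kmat_det_ne A hstab u hu.1 hu.2)
  have hvec : ContinuousOn
      (fun u => ((Kmat A u).det)⁻¹ • ((Kmat A u).adjugate *ᵥ (-(vecM Q))))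
      (Set.Icc (0:ℝ) 1) := hinv.smul hmv.continuousOn
  apply continuousOn_pi.mpr
  intro i
  apply continuousOn_pi.mpr
  intro j
  exact (continuous_apply (i, j)).comp_continuousOn hvec

lemma psd_kernel (F : Matrix (Fin N) (Fin N) ℝ) (hsym : Fᵀ = F)
    (hpsd : ∀ w : Fin N → ℝ, 0 ≤ w ⬝ᵥ F *ᵥ w) (v : Fin N → ℝ)
    (hv : v ⬝ᵥ F *ᵥ v = 0) : F *ᵥ v = 0 := by
  have hc : ∀ w : Fin N → ℝ, w ⬝ᵥ (F *ᵥ v) = 0 := by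
    intro w
    by_contra hC
    set c := w ⬝ᵥ (F *ᵥ v) with hcdef
    set d := w ⬝ᵥ (F *ᵥ w) with hddef
    have hd : 0 ≤ d := hpsd w
    have hsymp : v ⬝ᵥ (F *ᵥ w) = c := by
      rw [Matrix.dotProduct_mulVec, ← hsym, Matrix.vecMul_transpose, hcdef,
        dotProduct_comm]
    have hq : ∀ t : ℝ, 0 ≤ 2 * t * c + t ^ 2 * d := by
      intro t
      have h0 := hpsd (v + t • w)
      rw [Matrix.mulVec_add, Matrix.mulVec_smul, dotProduct_add, add_dotProduct,
        add_dotProduct, dotProduct_smul, smul_dotProduct, smul_dotProduct,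
        dotProduct_smul, hv, hsymp] at h0
      simp only [smul_eq_mul] at h0
      nlinarith [h0]
    have hc2 : 0 < c ^ 2 := by positivity
    have hd1 : 0 < d + 1 := by linarith
    have h := hq (-(c / (d + 1)))
    have hexp : 2 * -(c / (d + 1)) * c + (-(c / (d + 1))) ^ 2 * d
        = (-2 * c ^ 2 * (d + 1) + c ^ 2 * d) / (d + 1) ^ 2 := by
      field_simp
    rw [hexp] at h
    have hnum : 0 ≤ -2 * c ^ 2 * (d + 1) + c ^ 2 * d := by
      by_contra hneg
      push_neg at hneg
      have : (-2 * c ^ 2 * (d + 1) + c ^ 2 * d) / (d + 1) ^ 2 < 0 :=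
        div_neg_of_neg_of_pos hneg (by positivity)
      linarith
    nlinarith [hnum, hc2, hd]
  have := hc (F *ᵥ v)
  exact dotProduct_self_eq_zero.mp this

lemma form_smul_vec (M : Matrix (Fin N) (Fin N) ℝ) (r : ℝ) (v : Fin N → ℝ) :
    (r • v) ⬝ᵥ M *ᵥ (r • v) = r ^ 2 * (v ⬝ᵥ M *ᵥ v) := by
  rw [Matrix.mulVec_smul, dotProduct_smul, smul_dotProduct]
  simp only [smul_eq_mul]
  ring

set_option maxHeartbeats 2000000 in
lemma lyap_posdef (A Q F : Matrix (Fin N) (Fin N) ℝ)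
    (hstab : ∀ μ ∈ spectrum ℂ (A.map (Complex.ofReal : ℝ → ℂ)), μ.re < 0)
    (hQT : Qᵀ = Q) (hQ : ∀ v : Fin N → ℝ, v ≠ 0 → 0 < v ⬝ᵥ Q *ᵥ v)
    (hFT : Fᵀ = F) (hFeq : A * F + F * Aᵀ = -Q) :
    ∀ v : Fin N → ℝ, v ≠ 0 → 0 < v ⬝ᵥ F *ᵥ v := by
  by_contra hcon
  push_neg at hcon
  obtain ⟨v0, hv0ne, hv0le⟩ := hcon
  have hdet : ∀ u ∈ Set.Icc (0:ℝ) 1, (Kmat A u).det ≠ 0 :=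
    fun u hu => Kmat_det_ne A hstab u hu.1 hu.2
  set G : ℝ → Matrix (Fin N) (Fin N) ℝ := fun u => Gt A Q u with hGdef
  have hG1 : F = G 1 := by
    apply Gt_unique A Q 1 (hdet 1 ⟨zero_le_one, le_refl 1⟩)
    rw [hFeq]; norm_num
  have hG0 : G 0 = (2⁻¹ : ℝ) • Q := by
    symm
    apply Gt_unique A Q 0 (hdet 0 ⟨le_refl 0, zero_le_one⟩)
    rw [zero_smul, zero_sub, smul_smul]
    norm_num
  set T : Set ℝ := {u | u ∈ Set.Icc (0:ℝ) 1 ∧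
    ∃ w : Fin N → ℝ, ‖w‖ = 1 ∧ w ⬝ᵥ (G u) *ᵥ w ≤ 0} with hTdef
  have hT1 : (1:ℝ) ∈ T := by
    refine ⟨⟨zero_le_one, le_refl 1⟩, ‖v0‖⁻¹ • v0, norm_smul_inv_norm hv0ne, ?_⟩
    rw [← hG1, form_smul_vec]
    exact mul_nonpos_of_nonneg_of_nonpos (by positivity) hv0le
  have hTsub : T ⊆ Set.Icc (0:ℝ) 1 := fun u hu => hu.1
  have hTne : T.Nonempty := ⟨1, hT1⟩
  have hTbdd : BddBelow T := ⟨0, fun u hu => (hTsub hu).1⟩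
  set u₁ := sInf T with hu₁def
  have hu₁Icc : u₁ ∈ Set.Icc (0:ℝ) 1 :=
    ⟨le_csInf hTne (fun u hu => (hTsub hu).1), csInf_le hTbdd hT1⟩
  obtain ⟨useq, huanti, hutend, humem⟩ := exists_seq_tendsto_sInf hTne hTbdd
  choose wseq hwnorm hwle using fun k => (humem k).2
  have hsph : IsCompact (Metric.sphere (0 : Fin N → ℝ) 1) := isCompact_sphere 0 1
  have hwsph : ∀ k, wseq k ∈ Metric.sphere (0 : Fin N → ℝ) 1 := fun k => by
    rw [mem_sphere_zero_iff_norm]; exact hwnorm k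
  obtain ⟨winf, hwinfmem, φ, hφmono, hφtend⟩ := hsph.tendsto_subseq hwsph
  have hwinf : ‖winf‖ = 1 := mem_sphere_zero_iff_norm.mp hwinfmem
  have hwinfne : winf ≠ 0 := fun h => by simp [h] at hwinf
  have hΨ : Continuous (fun q : (Matrix (Fin N) (Fin N) ℝ) × (Fin N → ℝ) =>
      q.2 ⬝ᵥ (q.1 *ᵥ q.2)) :=
    continuous_snd.dotProduct (continuous_fst.matrix_mulVec continuous_snd)
  have hGc := Gt_contOn A Q hstab
  have key : ∀ (a : ℝ), a ∈ Set.Icc (0:ℝ) 1 → ∀ (as : ℕ → ℝ),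
      (∀ k, as k ∈ Set.Icc (0:ℝ) 1) → Tendsto as atTop (nhds a) →
      ∀ (zs : ℕ → (Fin N → ℝ)) (z : Fin N → ℝ), Tendsto zs atTop (nhds z) →
      Tendsto (fun k => zs k ⬝ᵥ (G (as k)) *ᵥ zs k) atTop (nhds (z ⬝ᵥ (G a) *ᵥ z)) := by
    intro a ha as has htendas zs z htendzs
    have hGt : Tendsto (fun k => G (as k)) atTop (nhds (G a)) := by
      have hcw : ContinuousWithinAt (fun u => G u) (Set.Icc (0:ℝ) 1) a := hGc a ha
      apply hcw.tendsto.comp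
      rw [tendsto_nhdsWithin_iff]
      exact ⟨htendas, Eventually.of_forall has⟩
    exact (hΨ.tendsto (G a, z)).comp (hGt.prodMk_nhds htendzs)
  have hlim : Tendsto (fun k => wseq (φ k) ⬝ᵥ G (useq (φ k)) *ᵥ wseq (φ k)) atTop
      (nhds (winf ⬝ᵥ G u₁ *ᵥ winf)) :=
    key u₁ hu₁Icc (useq ∘ φ) (fun k => hTsub (humem (φ k)))
      (hutend.comp hφmono.tendsto_atTop) (fun k => wseq (φ k)) winf hφtend
  have hle : winf ⬝ᵥ G u₁ *ᵥ winf ≤ 0 :=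
    le_of_tendsto hlim (Eventually.of_forall fun k => hwle (φ k))
  have hu₁pos : 0 < u₁ := by
    rcases eq_or_lt_of_le hu₁Icc.1 with h0 | h
    · exfalso
      have hpos : 0 < winf ⬝ᵥ G u₁ *ᵥ winf := by
        rw [← h0, hG0, Matrix.smul_mulVec, dotProduct_smul, smul_eq_mul]
        have := hQ winf hwinfne
        positivity
      linarith
    · exact h
  have hpsd : ∀ z : Fin N → ℝ, 0 ≤ z ⬝ᵥ G u₁ *ᵥ z := by
    intro z
    by_cases hz : z = 0
    · simp [hz]
    have hzn : ‖z‖ ≠ 0 := norm_ne_zero_iff.mpr hz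
    set zh := ‖z‖⁻¹ • z with hzhdef
    have hzh : ‖zh‖ = 1 := norm_smul_inv_norm hz
    set as : ℕ → ℝ := fun k => u₁ - u₁ * (1 / (k + 1)) with hasdef
    have haslt : ∀ k, as k < u₁ := by
      intro k
      have : 0 < u₁ * (1 / ((k:ℝ) + 1)) := by positivity
      simp only [hasdef]
      linarith
    have has : ∀ k, as k ∈ Set.Icc (0:ℝ) 1 := by
      intro k
      constructor
      · have h1 : 1 / ((k:ℝ) + 1) ≤ 1 := by
          rw [div_le_one (by positivity)]
          simp
        have h2 : u₁ * (1/((k:ℝ)+1)) ≤ u₁ * 1 :=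
          mul_le_mul_of_nonneg_left h1 (le_of_lt hu₁pos)
        simp only [hasdef]
        linarith
      · exact le_trans (le_of_lt (haslt k)) hu₁Icc.2
    have hastend : Tendsto as atTop (nhds u₁) := by
      have h1 : Tendsto (fun k : ℕ => u₁ * (1 / ((k:ℝ) + 1))) atTop (nhds (u₁ * 0)) :=
        tendsto_const_nhds.mul tendsto_one_div_add_atTop_nhds_zero_nat
      have h2 : Tendsto as atTop (nhds (u₁ - u₁ * 0)) := tendsto_const_nhds.sub h1
      simpa using h2
    have hnotT : ∀ k, as k ∉ T := fun k hmem' =>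
      absurd (csInf_le hTbdd hmem') (not_le.mpr (haslt k))
    have hposk : ∀ k, 0 < zh ⬝ᵥ G (as k) *ᵥ zh := by
      intro k
      by_contra hle'
      push_neg at hle'
      exact hnotT k ⟨has k, zh, hzh, hle'⟩
    have hlim2 : Tendsto (fun k => zh ⬝ᵥ G (as k) *ᵥ zh) atTop (nhds (zh ⬝ᵥ G u₁ *ᵥ zh)) :=
      key u₁ hu₁Icc as has hastend (fun _ => zh) zh tendsto_const_nhds
    have hzh0 : 0 ≤ zh ⬝ᵥ G u₁ *ᵥ zh :=
      ge_of_tendsto hlim2 (Eventually.of_forall fun k => le_of_lt (hposk k))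
    have hrw : z = ‖z‖ • zh := by
      rw [hzhdef, smul_smul, mul_inv_cancel₀ hzn, one_smul]
    rw [hrw, form_smul_vec]
    positivity
  have hform0 : winf ⬝ᵥ G u₁ *ᵥ winf = 0 := le_antisymm hle (hpsd winf)
  have hker : G u₁ *ᵥ winf = 0 :=
    psd_kernel (G u₁) (Gt_symm A Q u₁ hQT (hdet _ hu₁Icc)) hpsd winf hform0
  have heq := Gt_eq A Q u₁ (hdet _ hu₁Icc)
  have happ := congrArg (fun M => winf ⬝ᵥ M *ᵥ winf) heq
  rw [Matrix.sub_mulVec, Matrix.smul_mulVec, Matrix.smul_mulVec,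
    Matrix.add_mulVec, ← Matrix.mulVec_mulVec, ← Matrix.mulVec_mulVec, hker,
    Matrix.mulVec_zero] at happ
  have hterm : winf ⬝ᵥ (Gt A Q u₁ *ᵥ (Aᵀ *ᵥ winf)) = 0 := by
    rw [Matrix.dotProduct_mulVec, ← Gt_symm A Q u₁ hQT (hdet _ hu₁Icc),
      Matrix.vecMul_transpose]
    have : Gt A Q u₁ *ᵥ winf = 0 := hker
    rw [this, zero_dotProduct]
  rw [Matrix.neg_mulVec] at happ
  simp only [zero_add, dotProduct_sub, dotProduct_smul, dotProduct_neg, smul_eq_mul,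
    dotProduct_zero, hterm, mul_zero, sub_zero] at happ
  have hQ0 : winf ⬝ᵥ Q *ᵥ winf = 0 := by linarith [happ]
  exact absurd hQ0 (ne_of_gt (hQ winf hwinfne))

lemma symm_form_swap (P : Matrix (Fin N) (Fin N) ℝ) (hP : Pᵀ = P) (x y : Fin N → ℝ) :
    x ⬝ᵥ (P *ᵥ y) = (P *ᵥ x) ⬝ᵥ y := by
  rw [Matrix.dotProduct_mulVec]
  conv_lhs => rw [← hP]
  rw [Matrix.vecMul_transpose]

/-- quadratic form of the Riccati residual equals twice the feasibility form -/
lemma riccati_form_eq (A P : Matrix (Fin N) (Fin N) ℝ) (hP : Pᵀ = P) (x : Fin N → ℝ) :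
    x ⬝ᵥ ((P * A + Aᵀ * P + (P * P + P * P)) *ᵥ x)
      = 2 * (x ⬝ᵥ ((P * (A + P)) *ᵥ x)) := by
  have hAP : x ⬝ᵥ ((Aᵀ * P) *ᵥ x) = (A *ᵥ x) ⬝ᵥ (P *ᵥ x) := by
    rw [← Matrix.mulVec_mulVec, Matrix.dotProduct_mulVec, Matrix.vecMul_transpose]
  have hPA : x ⬝ᵥ ((P * A) *ᵥ x) = (A *ᵥ x) ⬝ᵥ (P *ᵥ x) := by
    rw [← Matrix.mulVec_mulVec, symm_form_swap P hP, dotProduct_comm]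
  have hPP : x ⬝ᵥ ((P * P) *ᵥ x) = (P *ᵥ x) ⬝ᵥ (P *ᵥ x) := by
    rw [← Matrix.mulVec_mulVec, symm_form_swap P hP]
  rw [Matrix.mul_add]
  simp only [Matrix.add_mulVec, dotProduct_add, hAP, hPA, hPP]
  ring

lemma single_form (M : Matrix (Fin N) (Fin N) ℝ) (i j : Fin N) :
    (Pi.single i (1:ℝ)) ⬝ᵥ (M *ᵥ (Pi.single j 1)) = M i j := by
  simp [Matrix.mulVec, dotProduct, Pi.single_apply, mul_ite, ite_mul,
    Finset.sum_ite_eq, Finset.sum_ite_eq']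

/-- for a stable matrix `A` (all complex eigenvalues have
negative real part), any trace-maximal feasible symmetric matrix `P̂`
(feasible meaning `xᵀP(A+P)x ≤ 0` for all `x`) satisfies the algebraic
Riccati equation `P̂A + AᵀP̂ + 2P̂² = 0`, and hence `⟨P̂x, (A+P̂)x⟩ = 0` for
all `x`, so `U(x) = (1/2)xᵀP̂x` yields an orthogonal decomposition
`Ax = −∇U(x) + (A+P̂)x`. -/
theorem trace_maximal_feasible_is_riccati (n : ℕ) (hn : 1 ≤ n)
    (A Phat : Matrix (Fin n) (Fin n) ℝ)
    (hstab : ∀ μ ∈ spectrum ℂ (A.map (Complex.ofReal : ℝ → ℂ)), μ.re < 0)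
    (hPhatSymm : Phat.IsSymm)
    (hPhatFeas : ∀ x : Fin n → ℝ, x ⬝ᵥ ((Phat * (A + Phat)).mulVec x) ≤ 0)
    (hmax : ∀ P : Matrix (Fin n) (Fin n) ℝ, P.IsSymm →
      (∀ x : Fin n → ℝ, x ⬝ᵥ ((P * (A + P)).mulVec x) ≤ 0) →
      P.trace ≤ Phat.trace) :
    Phat * A + Aᵀ * Phat + 2 • Phat^2 = 0 ∧
    ∀ x : Fin n → ℝ, (Phat.mulVec x) ⬝ᵥ ((A + Phat).mulVec x) = 0 := by
  have hPhT : Phatᵀ = Phat := hPhatSymm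
  -- the Lyapunov certificate
  set Q : Matrix (Fin n) (Fin n) ℝ := (1 : Matrix (Fin n) (Fin n) ℝ)
      + (1 : Matrix (Fin n) (Fin n) ℝ) with hQdef
  have hQT : Qᵀ = Q := by rw [hQdef, Matrix.transpose_add, Matrix.transpose_one]
  have hQpos : ∀ v : Fin n → ℝ, v ≠ 0 → 0 < v ⬝ᵥ Q *ᵥ v := by
    intro v hv
    have h0 : (0:ℝ) ≤ v ⬝ᵥ v := Finset.sum_nonneg fun i _ => mul_self_nonneg (v i)
    have h1 : (0:ℝ) < v ⬝ᵥ v := by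
      rcases lt_or_eq_of_le h0 with h | h
      · exact h
      · exact absurd (dotProduct_self_eq_zero.mp h.symm) hv
    rw [hQdef, Matrix.add_mulVec, Matrix.one_mulVec, dotProduct_add]
    linarith
  -- X : positive definite solution of A X + X Aᵀ = -Q
  have hdet1 : (Kmat A 1).det ≠ 0 := Kmat_det_ne A hstab 1 zero_le_one (le_refl 1)
  set X : Matrix (Fin n) (Fin n) ℝ := Gt A Q 1 with hXdef
  have hXT : Xᵀ = X := Gt_symm A Q 1 hQT hdet1
  have hXeq : A * X + X * Aᵀ = -Q := by
    have h := Gt_eq A Q 1 hdet1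
    rw [← hXdef] at h
    simpa using h
  have hXpos : ∀ v : Fin n → ℝ, v ≠ 0 → 0 < v ⬝ᵥ X *ᵥ v :=
    lyap_posdef A Q X hstab hQT hQpos hXT hXeq
  have hXdetne : X.det ≠ 0 := by
    intro h
    obtain ⟨v, hvne, hv⟩ := Matrix.exists_mulVec_eq_zero_iff.mpr h
    have := hXpos v hvne
    rw [hv] at this
    simp at this
  have hXunit : IsUnit X.det := isUnit_iff_ne_zero.mpr hXdetne
  set Y : Matrix (Fin n) (Fin n) ℝ := X⁻¹ with hYdef
  have hXY : X * Y = 1 := Matrix.mul_nonsing_inv X hXunit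
  have hYX : Y * X = 1 := Matrix.nonsing_inv_mul X hXunit
  have hYT : Yᵀ = Y := by
    rw [hYdef, Matrix.transpose_nonsing_inv, hXT]
  -- Y = X⁻¹ solves the Riccati equation
  have h0 : A * X + X * Aᵀ + Q = 0 := by rw [hXeq]; abel
  have hYric : Y * A + Aᵀ * Y + (Y * Y + Y * Y) = 0 := by
    have hexp : Y * (A * X + X * Aᵀ + Q) * Y = Y * A + Aᵀ * Y + (Y * Y + Y * Y) := by
      have e1 : Y * (A * X) * Y = Y * A := by
        rw [show Y * (A * X) * Y = Y * A * (X * Y) by noncomm_ring, hXY, Matrix.mul_one]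
      have e2 : Y * (X * Aᵀ) * Y = Aᵀ * Y := by
        rw [show Y * (X * Aᵀ) * Y = (Y * X) * (Aᵀ * Y) by noncomm_ring, hYX, Matrix.one_mul]
      have e3 : Y * Q * Y = Y * Y + Y * Y := by
        rw [hQdef, Matrix.mul_add, Matrix.mul_one, Matrix.add_mul]
      calc Y * (A * X + X * Aᵀ + Q) * Y
          = Y * (A * X) * Y + Y * (X * Aᵀ) * Y + Y * Q * Y := by noncomm_ring
        _ = Y * A + Aᵀ * Y + (Y * Y + Y * Y) := by rw [e1, e2, e3]
    rw [← hexp, h0, Matrix.mul_zero, Matrix.zero_mul]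
  -- Y is feasible
  have hYfeas : ∀ x : Fin n → ℝ, x ⬝ᵥ ((Y * (A + Y)).mulVec x) ≤ 0 := by
    intro x
    have h := riccati_form_eq A Y hYT x
    rw [hYric] at h
    simp only [Matrix.zero_mulVec, dotProduct_zero] at h
    linarith
  have htr : Y.trace ≤ Phat.trace := hmax Y hYT hYfeas
  -- the gap E := Y - Phat
  set E : Matrix (Fin n) (Fin n) ℝ := Y - Phat with hEdef
  have hET : Eᵀ = E := by rw [hEdef, Matrix.transpose_sub, hYT, hPhT]
  -- quadratic form of the Riccati residual of Phat is ≤ 0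
  have hMhat : ∀ x : Fin n → ℝ,
      x ⬝ᵥ ((Phat * A + Aᵀ * Phat + (Phat * Phat + Phat * Phat)) *ᵥ x) ≤ 0 := by
    intro x
    rw [riccati_form_eq A Phat hPhT x]
    have := hPhatFeas x
    linarith
  -- key matrix identity
  set Z : Matrix (Fin n) (Fin n) ℝ := A + (Y + Y) with hZdef
  set W : Matrix (Fin n) (Fin n) ℝ := Aᵀ + (Y + Y) with hWdef
  have hident : Phat * A + Aᵀ * Phat + (Phat * Phat + Phat * Phat)
      = (Y * A + Aᵀ * Y + (Y * Y + Y * Y)) - (E * Z + W * E) + (E * E + E * E) := by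
    rw [hEdef, hZdef, hWdef]
    noncomm_ring
  have hident' : Phat * A + Aᵀ * Phat + (Phat * Phat + Phat * Phat)
      = - (E * Z + W * E) + (E * E + E * E) := by
    rw [hident, hYric]
    abel
  -- the congruenced matrix F := X E X satisfies the Lyapunov inequality
  set F : Matrix (Fin n) (Fin n) ℝ := X * E * X with hFdef
  have hFT : Fᵀ = F := by
    rw [hFdef, Matrix.transpose_mul, Matrix.transpose_mul, hXT, hET, Matrix.mul_assoc]
  have hZX : Z * X = -(X * Aᵀ) := by
    rw [hZdef, Matrix.add_mul]
    have hq : (Y + Y) * X = Q := by rw [Matrix.add_mul, hYX, hQdef]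
    rw [hq]
    calc A * X + Q = (A * X + X * Aᵀ + Q) - X * Aᵀ := by abel
      _ = -(X * Aᵀ) := by rw [h0]; abel
  have hXW : X * W = -(A * X) := by
    rw [hWdef, Matrix.mul_add]
    have hq : X * (Y + Y) = Q := by rw [Matrix.mul_add, hXY, hQdef]
    rw [hq]
    calc X * Aᵀ + Q = (A * X + X * Aᵀ + Q) - A * X := by abel
      _ = -(A * X) := by rw [h0]; abel
  have hcong : X * (E * Z + W * E) * X = -(A * F + F * Aᵀ) := by
    have c1 : X * (E * Z + W * E) * X = X * E * (Z * X) + (X * W) * (E * X) := by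
      noncomm_ring
    rw [c1, hZX, hXW, hFdef]
    noncomm_ring
  have hcongr_form : ∀ (M : Matrix (Fin n) (Fin n) ℝ) (S : Matrix (Fin n) (Fin n) ℝ),
      Sᵀ = S → ∀ x : Fin n → ℝ, x ⬝ᵥ ((S * M * S) *ᵥ x) = (S *ᵥ x) ⬝ᵥ (M *ᵥ (S *ᵥ x)) := by
    intro M S hS x
    rw [← Matrix.mulVec_mulVec, ← Matrix.mulVec_mulVec, symm_form_swap S hS]
  have hEZWE : E * Z + W * E = (E * E + E * E)
      - (Phat * A + Aᵀ * Phat + (Phat * Phat + Phat * Phat)) := by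
    rw [hident']
    abel
  have hEZWE_form : ∀ y : Fin n → ℝ, 0 ≤ y ⬝ᵥ ((E * Z + W * E) *ᵥ y) := by
    intro y
    rw [hEZWE]
    have hEE : 0 ≤ y ⬝ᵥ ((E * E) *ᵥ y) := by
      rw [← Matrix.mulVec_mulVec, symm_form_swap E hET]
      exact Finset.sum_nonneg fun i _ => mul_self_nonneg _
    have hM := hMhat y
    rw [Matrix.sub_mulVec, dotProduct_sub, Matrix.add_mulVec, dotProduct_add]
    linarith
  have hFle : ∀ x : Fin n → ℝ, x ⬝ᵥ ((A * F + F * Aᵀ) *ᵥ x) ≤ 0 := by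
    intro x
    have h := hcongr_form (E * Z + W * E) X hXT x
    rw [hcong] at h
    have h2 := hEZWE_form (X *ᵥ x)
    rw [← h] at h2
    rw [Matrix.neg_mulVec, dotProduct_neg] at h2
    linarith
  have hAFsymm : (A * F + F * Aᵀ)ᵀ = A * F + F * Aᵀ := by
    have t1 : (A * F)ᵀ = Fᵀ * Aᵀ := Matrix.transpose_mul A F
    have t2 : (F * Aᵀ)ᵀ = A * Fᵀ := by
      rw [Matrix.transpose_mul F Aᵀ, Matrix.transpose_transpose]
    rw [Matrix.transpose_add, t1, t2, hFT, add_comm]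
  -- F is positive semidefinite, by perturbation
  have hFpsd : ∀ x : Fin n → ℝ, 0 ≤ x ⬝ᵥ F *ᵥ x := by
    intro x
    by_cases hx : x = 0
    · simp [hx]
    by_contra hneg
    push_neg at hneg
    set a := x ⬝ᵥ F *ᵥ x with ha
    set b := x ⬝ᵥ X *ᵥ x with hb
    have hbpos : 0 < b := hXpos x hx
    set ε := -a / (2 * b) with hε
    have hεpos : 0 < ε := by
      apply div_pos (by linarith) (by linarith)
    set Qε : Matrix (Fin n) (Fin n) ℝ := -(A * F + F * Aᵀ) + ε • Q with hQε
    have hQεT : Qεᵀ = Qε := by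
      rw [hQε, Matrix.transpose_add, Matrix.transpose_neg, hAFsymm, Matrix.transpose_smul, hQT]
    have hQεpos : ∀ v : Fin n → ℝ, v ≠ 0 → 0 < v ⬝ᵥ Qε *ᵥ v := by
      intro v hv
      rw [hQε, Matrix.add_mulVec, dotProduct_add, Matrix.neg_mulVec, dotProduct_neg,
        Matrix.smul_mulVec, dotProduct_smul, smul_eq_mul]
      have h1 := hFle v
      have h2 := hQpos v hv
      nlinarith
    set Fε : Matrix (Fin n) (Fin n) ℝ := F + ε • X with hFε
    have hFεT : Fεᵀ = Fε := by
      rw [hFε, Matrix.transpose_add, hFT, Matrix.transpose_smul, hXT]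
    have hFεeq : A * Fε + Fε * Aᵀ = -Qε := by
      rw [hFε, hQε, Matrix.mul_add, Matrix.add_mul, Matrix.mul_smul, Matrix.smul_mul]
      have hre : A * F + ε • (A * X) + (F * Aᵀ + ε • (X * Aᵀ))
          = (A * F + F * Aᵀ) + ε • (A * X + X * Aᵀ) := by
        rw [smul_add]; abel
      rw [hre, hXeq, smul_neg]
      abel
    have hpos := lyap_posdef A Qε Fε hstab hQεT hQεpos hFεT hFεeq x hx
    rw [hFε, Matrix.add_mulVec, dotProduct_add, Matrix.smul_mulVec, dotProduct_smul,
      smul_eq_mul, ← ha, ← hb] at hpos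
    have hεb : ε * b = -a / 2 := by
      rw [hε]; field_simp
    linarith
  -- E is positive semidefinite
  have hEYFY : E = Y * F * Y := by
    rw [hFdef, show Y * (X * E * X) * Y = (Y * X) * E * (X * Y) from by noncomm_ring,
      hYX, hXY, Matrix.one_mul, Matrix.mul_one]
  have hEpsd : ∀ x : Fin n → ℝ, 0 ≤ x ⬝ᵥ E *ᵥ x := by
    intro x
    rw [hEYFY, hcongr_form F Y hYT x]
    exact hFpsd (Y *ᵥ x)
  -- trace of E is nonpositive, hence E = 0
  have htrE : E.trace ≤ 0 := by
    rw [hEdef, Matrix.trace_sub]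
    linarith
  have hdiagnn : ∀ i, 0 ≤ E i i := by
    intro i
    have := hEpsd (Pi.single i 1)
    rwa [single_form E i i] at this
  have htreq : E.trace = ∑ i, E i i := rfl
  have hdiag0 : ∀ i, E i i = 0 := by
    have hsum0 : ∑ i, E i i = 0 :=
      le_antisymm (htreq ▸ htrE) (Finset.sum_nonneg fun i _ => hdiagnn i)
    intro i
    exact (Finset.sum_eq_zero_iff_of_nonneg (fun i _ => hdiagnn i)).mp hsum0 i
      (Finset.mem_univ i)
  have hE0 : E = 0 := by
    ext i j
    by_cases hij : i = j
    · subst hij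
      simpa using hdiag0 i
    · have hsymE : E j i = E i j := by
        have h := congrFun (congrFun hET i) j
        simpa [Matrix.transpose_apply] using h
      have h1 := hEpsd (Pi.single i 1 + Pi.single j 1)
      have h2 := hEpsd (Pi.single i 1 - Pi.single j 1)
      simp only [Matrix.mulVec_add, Matrix.mulVec_sub, add_dotProduct, sub_dotProduct,
        dotProduct_add, dotProduct_sub] at h1 h2
      rw [single_form E i i, single_form E i j, single_form E j i, single_form E j j,
        hdiag0 i, hdiag0 j] at h1 h2
      rw [hsymE] at h1 h2
      simp only [Matrix.zero_apply]
      linarith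
  have hPY : Phat = Y := by
    have : Y - Phat = 0 := by rw [← hEdef]; exact hE0
    have := sub_eq_zero.mp this
    exact this.symm
  have hPric : Phat * A + Aᵀ * Phat + (Phat * Phat + Phat * Phat) = 0 := by
    rw [hPY]; exact hYric
  constructor
  · rw [two_smul, pow_two]
    exact hPric
  · intro x
    have h := riccati_form_eq A Phat hPhT x
    rw [hPric] at h
    simp only [Matrix.zero_mulVec, dotProduct_zero] at h
    have hform : x ⬝ᵥ ((Phat * (A + Phat)) *ᵥ x) = 0 := by linarith
    rw [← Matrix.mulVec_mulVec, symm_form_swap Phat hPhT] at hform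
    exact hform
end

section
/- Let n ≥ 1, let f : ℝⁿ → ℝⁿ, and let U, V : ℝⁿ → ℝ be differentiable. Suppose that for all x ∈ ℝⁿ: (i) ⟨∇V(x), f(x)⟩ + ‖∇V(x)‖² ≤ 0, and (ii) ⟨∇V(x), f(x) + 2∇U(x)⟩ ≥ ‖∇U(x)‖² (the iterative-improvement constraint with α = 0). Then ∇V(x) = ∇U(x) for all x ∈ ℝⁿ, and ⟨∇U(x), f(x) + ∇U(x)⟩ = 0 for all x, i.e. the decomposition f = −∇U + (f + ∇U) is orthogonal. -/
open scoped RealInnerProductSpace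

/-- the `α = 0` case of the iterative-improvement constraints
forces `∇V = ∇U` everywhere and orthogonality of the decomposition
`f = −∇U + (f + ∇U)`. -/
theorem iterative_improvement_alpha_zero (n : ℕ) (hn : 1 ≤ n)
    (f : EuclideanSpace ℝ (Fin n) → EuclideanSpace ℝ (Fin n))
    (U V : EuclideanSpace ℝ (Fin n) → ℝ)
    (hU : Differentiable ℝ U) (hV : Differentiable ℝ V)
    (hVsub : ∀ x, ⟪gradient V x, f x⟫ + ‖gradient V x‖^2 ≤ 0)
    (himp : ∀ x, ⟪gradient V x, f x + 2 • gradient U x⟫ ≥ ‖gradient U x‖^2) :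
    (∀ x : EuclideanSpace ℝ (Fin n), gradient V x = gradient U x) ∧
    (∀ x : EuclideanSpace ℝ (Fin n), ⟪gradient U x, f x + gradient U x⟫ = 0) := by
  have key : ∀ x : EuclideanSpace ℝ (Fin n), gradient V x = gradient U x := by
    intro x
    set v := gradient V x
    set u := gradient U x
    have h1 := hVsub x
    have h2 := himp x
    rw [inner_add_right, two_nsmul, inner_add_right] at h2
    have hsq : ‖v - u‖^2 ≤ 0 := by
      have := norm_sub_sq_real v u
      have hc : ⟪v, u⟫ = ⟪u, v⟫ := real_inner_comm u v
      nlinarith [this]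
    have : v - u = 0 := by
      have := sq_nonneg ‖v - u‖
      have hz : ‖v - u‖ = 0 := by nlinarith
      exact norm_eq_zero.mp hz
    exact sub_eq_zero.mp this
  refine ⟨key, fun x => ?_⟩
  have h1 := hVsub x
  have h2 := himp x
  rw [key x] at h1 h2
  rw [inner_add_right, two_nsmul, inner_add_right] at h2
  rw [inner_add_right]
  have : ⟪gradient U x, gradient U x⟫ = ‖gradient U x‖^2 := real_inner_self_eq_norm_sq _
  nlinarith
end

section
/- Define f : ℝ² → ℝ² by f(x, y) = (−1 + 9x − 2x³ + 9y − 2y³, 1 − 11x + 2x³ + 11y − 2y³), and define U : ℝ² → ℝ by U(x, y) = 0.5·(x⁴ + y⁴) − 5·(x² + y²) + x·y + x. Then for all (x, y) ∈ ℝ², f(x, y) = −∇U(x, y) + f_U(x, y) where f_U(x, y) = (−∂U/∂y (x,y), ∂U/∂x (x,y)); in particular ⟨∇U(x,y), f_U(x,y)⟩ = 0 for all (x, y), so f admits an orthogonal decomposition with potential U. -/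
lemma derivX (a b : ℝ) :
    deriv (fun s : ℝ => 0.5*(s^4 + b^4) - 5*(s^2 + b^2) + s*b + s) a
      = 2*a^3 - 10*a + b + 1 := by
  have h0 := ((((((hasDerivAt_pow 4 a).add_const (b^4)).const_mul (0.5:ℝ)).sub
      (((hasDerivAt_pow 2 a).add_const (b^2)).const_mul 5)).add
      ((hasDerivAt_id a).mul_const b)).add (hasDerivAt_id a))
  have h : HasDerivAt (fun s : ℝ => 0.5*(s^4 + b^4) - 5*(s^2 + b^2) + s*b + s)
      (2*a^3 - 10*a + b + 1) a := by
    refine h0.congr_deriv ?_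
    push_cast; ring
  exact h.deriv

lemma derivY (a b : ℝ) :
    deriv (fun s : ℝ => 0.5*(a^4 + s^4) - 5*(a^2 + s^2) + a*s + a) b
      = 2*b^3 - 10*b + a := by
  have h0 := ((((((hasDerivAt_pow 4 b).const_add (a^4)).const_mul (0.5:ℝ)).sub
      (((hasDerivAt_pow 2 b).const_add (a^2)).const_mul 5)).add
      ((hasDerivAt_id b).const_mul a)).add_const a)
  have h : HasDerivAt (fun s : ℝ => 0.5*(a^4 + s^4) - 5*(a^2 + s^2) + a*s + a)
      (2*b^3 - 10*b + a) b := by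
    refine h0.congr_deriv ?_
    push_cast; ring
  exact h.deriv

/-- the quartic multistable system of Zhou et al. admits an
orthogonal decomposition `f = −∇U + f_U` with
`U(x,y) = 0.5(x⁴+y⁴) − 5(x²+y²) + xy + x` and
`f_U = (−∂U/∂y, ∂U/∂x)`, which is pointwise orthogonal to `∇U`. -/
theorem zhou_quartic_orthogonal_decomposition
    (f : ℝ × ℝ → ℝ × ℝ) (U : ℝ × ℝ → ℝ)
    (hf : ∀ p : ℝ × ℝ, f p =
      (-1 + 9*p.1 - 2*p.1^3 + 9*p.2 - 2*p.2^3,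
        1 - 11*p.1 + 2*p.1^3 + 11*p.2 - 2*p.2^3))
    (hU : ∀ p : ℝ × ℝ, U p =
      0.5*(p.1^4 + p.2^4) - 5*(p.1^2 + p.2^2) + p.1*p.2 + p.1) :
    ∀ p : ℝ × ℝ,
      ((f p).1 = -(deriv (fun s => U (s, p.2)) p.1) +
          -(deriv (fun s => U (p.1, s)) p.2) ∧
        (f p).2 = -(deriv (fun s => U (p.1, s)) p.2) +
          (deriv (fun s => U (s, p.2)) p.1)) ∧
      (deriv (fun s => U (s, p.2)) p.1) * (-(deriv (fun s => U (p.1, s)) p.2)) +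
        (deriv (fun s => U (p.1, s)) p.2) * (deriv (fun s => U (s, p.2)) p.1) = 0 := by
  intro p
  have hdx : deriv (fun s => U (s, p.2)) p.1 = 2*p.1^3 - 10*p.1 + p.2 + 1 := by
    simp only [hU]; exact derivX p.1 p.2
  have hdy : deriv (fun s => U (p.1, s)) p.2 = 2*p.2^3 - 10*p.2 + p.1 := by
    simp only [hU]; exact derivY p.1 p.2
  rw [hf, hdx, hdy]
  refine ⟨⟨by ring, by ring⟩, by ring⟩
end
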